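/- A linear operator T : H → Y from a Hilbert space H to a Banach space Y is bounded if it maps every orthonormal sequence of H onto a limited subset of Y. -/

import Mathlib

open Filter

/-- A subset `A` of a normed space is limited if every weak*-null sequence of functionals
converges to `0` uniformly on `A`. -/
def IsLimited (𝕜 : Type*) [RCLike 𝕜] {X : Type*} [NormedAddCommGroup X]
    [NormedSpace 𝕜 X] (A : Set X) : Prop :=
  ∀ f : ℕ → X →L[𝕜] 𝕜, (∀ x : X, Tendsto (fun n => f n x) atTop (nhds 0)) →
    ∀ ε > (0 : ℝ), ∃ N : ℕ, ∀ n ≥ N, ∀ a ∈ A, ‖f n a‖ < ε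

/-- A limited set is bounded. -/
lemma bounded_of_isLimited' {𝕜 Y : Type*} [RCLike 𝕜] [NormedAddCommGroup Y] [NormedSpace 𝕜 Y]
    {A : Set Y}
    (hA : ∀ f : ℕ → Y →L[𝕜] 𝕜, (∀ x : Y, Tendsto (fun n => f n x) atTop (nhds 0)) →
      ∀ ε > (0 : ℝ), ∃ N : ℕ, ∀ n ≥ N, ∀ a ∈ A, ‖f n a‖ < ε) :
    ∃ C : ℝ, ∀ a ∈ A, ‖a‖ ≤ C := by
  -- pointwise boundedness
  have hpt : ∀ f : Y →L[𝕜] 𝕜, ∃ C : ℝ, ∀ a ∈ A, ‖f a‖ ≤ C := by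
    intro f
    set g : ℕ → Y →L[𝕜] 𝕜 := fun n => (((n : 𝕜) + 1)⁻¹) • f with hg
    have hnorm : ∀ n x, ‖g n x‖ = ((n : ℝ) + 1)⁻¹ * ‖f x‖ := by
      intro n x
      have hc : ((n : 𝕜) + 1) = ((n + 1 : ℕ) : 𝕜) := by push_cast; ring
      rw [hg]
      simp only [ContinuousLinearMap.smul_apply, smul_eq_mul, norm_mul, norm_inv, hc,
        RCLike.norm_natCast]
      push_cast; ring
    have hg0 : ∀ x : Y, Tendsto (fun n => g n x) atTop (nhds 0) := by
      intro x
      rw [tendsto_zero_iff_norm_tendsto_zero]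
      simp_rw [hnorm]
      have := tendsto_one_div_add_atTop_nhds_zero_nat.mul_const ‖f x‖
      rw [zero_mul] at this
      convert this using 2 with n
      rw [one_div]
    obtain ⟨N, hN⟩ := hA g hg0 1 one_pos
    refine ⟨(N : ℝ) + 1, fun a ha => ?_⟩
    have := hN N le_rfl a ha
    rw [hnorm] at this
    have hpos : (0 : ℝ) < (N : ℝ) + 1 := by positivity
    have h1 : ((N : ℝ) + 1) * ((N : ℝ) + 1)⁻¹ = 1 := mul_inv_cancel₀ hpos.ne'
    nlinarith [mul_lt_mul_of_pos_left this hpos]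
  rcases A.eq_empty_or_nonempty with rfl | ⟨a0, ha0⟩
  · exact ⟨0, fun a ha => absurd ha (Set.notMem_empty a)⟩
  · set g : A → StrongDual 𝕜 Y →L[𝕜] 𝕜 :=
      fun a => NormedSpace.inclusionInDoubleDualLi 𝕜 (a : Y) with hg
    have hb : ∀ f : StrongDual 𝕜 Y, ∃ C, ∀ a : A, ‖g a f‖ ≤ C := by
      intro f
      obtain ⟨C, hC⟩ := hpt f
      exact ⟨C, fun a => by simpa [hg, NormedSpace.inclusionInDoubleDualLi,
        NormedSpace.dual_def] using hC a a.2⟩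
    obtain ⟨C', hC'⟩ := banach_steinhaus hb
    refine ⟨C', fun a ha => ?_⟩
    have := hC' ⟨a, ha⟩
    rwa [show g ⟨a, ha⟩ = NormedSpace.inclusionInDoubleDualLi (E := Y) 𝕜 a from rfl,
      (NormedSpace.inclusionInDoubleDualLi 𝕜).norm_map] at this

section Key
variable {𝕜 H Y : Type*} [RCLike 𝕜] [NormedAddCommGroup H] [InnerProductSpace 𝕜 H]
  [CompleteSpace H] [NormedAddCommGroup Y] [NormedSpace 𝕜 Y]

local notation "⟪" x ", " y "⟫" => @inner 𝕜 _ _ x y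

lemma key_step (T : H →ₗ[𝕜] Y) (hT : ¬ Continuous T) (n : ℕ) (v : Fin n → H) :
    ∃ x : H, ‖x‖ = 1 ∧ (∀ i, ⟪v i, x⟫ = 0) ∧ (n : ℝ) ≤ ‖T x‖ := by
  set F := Submodule.span 𝕜 (Set.range v) with hF
  haveI : FiniteDimensional 𝕜 F := FiniteDimensional.span_of_finite 𝕜 (Set.finite_range v)
  haveI : CompleteSpace F := FiniteDimensional.complete 𝕜 F
  have hub : ¬ ∃ C : ℝ, ∀ x ∈ Fᗮ, ‖T x‖ ≤ C * ‖x‖ := by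
    rintro ⟨C, hC⟩
    apply hT
    have h1 : Continuous fun x : H => T ((Submodule.orthogonalProjectionOnto F x : H)) := by
      have hfin : Continuous (T.comp F.subtype) :=
        LinearMap.continuous_of_finiteDimensional _
      exact hfin.comp (Submodule.orthogonalProjectionOnto F).continuous
    have h2 : Continuous fun x : H => T ((Submodule.orthogonalProjectionOnto Fᗮ x : H)) := by
      have hS : Continuous (T.comp Fᗮ.subtype) :=
        AddMonoidHomClass.continuous_of_bound (T.comp Fᗮ.subtype) C
          (fun y => by simpa using hC y y.2)
      exact hS.comp (Submodule.orthogonalProjectionOnto Fᗮ).continuous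
    have heq : ∀ x : H, T x = T ((Submodule.orthogonalProjectionOnto F x : H)) +
        T ((Submodule.orthogonalProjectionOnto Fᗮ x : H)) := by
      intro x
      conv_lhs => rw [← Submodule.starProjection_add_starProjection_orthogonal (K := F) x,
        Submodule.starProjection_apply, Submodule.starProjection_apply]
      rw [map_add]
    rw [show (⇑T : H → Y) = fun x => T ((Submodule.orthogonalProjectionOnto F x : H)) +
        T ((Submodule.orthogonalProjectionOnto Fᗮ x : H)) from funext heq]
    exact h1.add h2
  push_neg at hub
  obtain ⟨x, hxF, hx⟩ := hub n
  have hx0 : x ≠ 0 := by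
    rintro rfl
    simp only [map_zero, norm_zero, mul_zero] at hx
    exact lt_irrefl 0 hx
  have hxn : (0 : ℝ) < ‖x‖ := norm_pos_iff.2 hx0
  refine ⟨(‖x‖⁻¹ : 𝕜) • x, norm_smul_inv_norm hx0, fun i => ?_, ?_⟩
  · rw [inner_smul_right,
      Submodule.inner_right_of_mem_orthogonal (Submodule.subset_span (Set.mem_range_self i)) hxF, mul_zero]
  · rw [map_smul, norm_smul, norm_inv, RCLike.norm_ofReal, abs_of_pos hxn]
    calc (n : ℝ) = ‖x‖⁻¹ * ((n : ℝ) * ‖x‖) := by field_simp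
    _ ≤ ‖x‖⁻¹ * ‖T x‖ := by
        exact mul_le_mul_of_nonneg_left hx.le (inv_nonneg.2 hxn.le)
end Key


theorem bounded_of_limited_on_orthonormal_sequences
    {𝕜 H Y : Type*} [RCLike 𝕜] [NormedAddCommGroup H] [InnerProductSpace 𝕜 H]
    [CompleteSpace H] [NormedAddCommGroup Y] [NormedSpace 𝕜 Y] [CompleteSpace Y]
    (T : H →ₗ[𝕜] Y)
    (h : ∀ u : ℕ → H, Orthonormal 𝕜 u → IsLimited 𝕜 (Set.range fun n => T (u n))) :
    Continuous T := by
  by_contra hT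
  have key := key_step T hT
  let v : (n : ℕ) → Fin n → H :=
    fun n => Nat.rec Fin.elim0 (fun m vm => Fin.snoc vm (key m vm).choose) n
  let e : ℕ → H := fun n => (key n (v n)).choose
  have hv : ∀ n (i : Fin n), v n i = e (i : ℕ) := by
    intro n
    induction n with
    | zero => exact fun i => i.elim0
    | succ m ih =>
      have hsnoc : v (m + 1) = Fin.snoc (v m) (e m) := rfl
      refine Fin.lastCases ?_ ?_
      · rw [hsnoc, Fin.snoc_last]
      · intro j
        rw [hsnoc, Fin.snoc_castSucc]
        exact ih j
  have he : ∀ n, ‖e n‖ = 1 ∧ (∀ i : Fin n, inner 𝕜 (v n i) (e n) = (0 : 𝕜)) ∧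
      (n : ℝ) ≤ ‖T (e n)‖ := fun n => (key n (v n)).choose_spec
  have horth : Orthonormal 𝕜 e := by
    constructor
    · exact fun n => (he n).1
    · intro i j hij
      rcases lt_or_gt_of_ne hij with hlt | hgt
      · have := (he j).2.1 ⟨i, hlt⟩
        rwa [hv j ⟨i, hlt⟩] at this
      · have := (he i).2.1 ⟨j, hgt⟩
        rw [hv i ⟨j, hgt⟩] at this
        rw [← inner_conj_symm, this, map_zero]
  obtain ⟨C, hC⟩ := bounded_of_isLimited' (h e horth)
  have h1 := hC (T (e (⌈C⌉₊ + 1))) ⟨⌈C⌉₊ + 1, rfl⟩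
  have h2 := (he (⌈C⌉₊ + 1)).2.2
  have h3 := Nat.le_ceil C
  push_cast at h2
  linarith
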